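/- Let F = MonoidAlgebra ℚ (FreeMonoid ℕ) with the three bilinear operations ≺, ∘, ≻ defined on basis words by Loday–Ronco's max-letter rule. Then for all x, y, z ∈ F, (x ≺ y) ∘ z = x ∘ (y ≻ z). -/

import Mathlib

/-- The right operation `≻` of the Loday–Ronco dendriform trialgebra structure on
noncommutative polynomials: on basis words, `u ≻ v = uv` if `u, v` are nonempty and
`max u < max v`, and `0` otherwise; extended bilinearly. -/
noncomputable def trSucc {α : Type*} [LinearOrder α]
    (x y : MonoidAlgebra ℚ (FreeMonoid α)) : MonoidAlgebra ℚ (FreeMonoid α) :=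
  x.coeff.sum fun u a => y.coeff.sum fun v b =>
    if u.toList ≠ [] ∧ v.toList ≠ [] ∧ u.toList.maximum < v.toList.maximum
    then MonoidAlgebra.single (u * v) (a * b) else 0

/-- The middle operation `∘`: on basis words, `u ∘ v = uv` if `u, v` are nonempty and
`max u = max v`, and `0` otherwise; extended bilinearly. -/
noncomputable def trCirc {α : Type*} [LinearOrder α]
    (x y : MonoidAlgebra ℚ (FreeMonoid α)) : MonoidAlgebra ℚ (FreeMonoid α) :=
  x.coeff.sum fun u a => y.coeff.sum fun v b =>
    if u.toList ≠ [] ∧ v.toList ≠ [] ∧ u.toList.maximum = v.toList.maximum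
    then MonoidAlgebra.single (u * v) (a * b) else 0

/-- The left operation `≺`: on basis words, `u ≺ v = uv` if `u, v` are nonempty and
`max u > max v`, and `0` otherwise; extended bilinearly. -/
noncomputable def trPrec {α : Type*} [LinearOrder α]
    (x y : MonoidAlgebra ℚ (FreeMonoid α)) : MonoidAlgebra ℚ (FreeMonoid α) :=
  x.coeff.sum fun u a => y.coeff.sum fun v b =>
    if u.toList ≠ [] ∧ v.toList ≠ [] ∧ v.toList.maximum < u.toList.maximum
    then MonoidAlgebra.single (u * v) (a * b) else 0

section Aux

set_option linter.unusedSectionVars false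

variable {α : Type*} [LinearOrder α]

theorem list_maximum_append (l₁ l₂ : List α) :
    (l₁ ++ l₂).maximum = max l₁.maximum l₂.maximum := by
  induction l₁ with
  | nil => simp
  | cons a l ih =>
      rw [List.cons_append, List.maximum_cons, List.maximum_cons, ih, max_assoc]

/-- generic bilinear operation -/
noncomputable def biop (p : FreeMonoid α → FreeMonoid α → Prop)
    [∀ u v, Decidable (p u v)]
    (x y : MonoidAlgebra ℚ (FreeMonoid α)) : MonoidAlgebra ℚ (FreeMonoid α) :=
  x.coeff.sum fun u a => y.coeff.sum fun v b =>
    if p u v then MonoidAlgebra.single (u * v) (a * b) else 0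

variable (p : FreeMonoid α → FreeMonoid α → Prop) [∀ u v, Decidable (p u v)]

theorem inner_zero (y : MonoidAlgebra ℚ (FreeMonoid α)) (u : FreeMonoid α) :
    (y.coeff.sum fun v b =>
      if p u v then MonoidAlgebra.single (u * v) ((0 : ℚ) * b) else 0) = 0 := by
  refine Finset.sum_eq_zero fun v _ => ?_
  dsimp only
  split_ifs <;> simp

theorem biop_zero_left (y : MonoidAlgebra ℚ (FreeMonoid α)) : biop p 0 y = 0 := by
  simp [biop, Finsupp.sum_zero_index]

theorem biop_zero_right (x : MonoidAlgebra ℚ (FreeMonoid α)) : biop p x 0 = 0 := by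
  simp [biop, Finsupp.sum_zero_index]

theorem biop_single_single (u v : FreeMonoid α) (a b : ℚ) :
    biop p (MonoidAlgebra.single u a) (MonoidAlgebra.single v b) =
      if p u v then MonoidAlgebra.single (u * v) (a * b) else 0 := by
  unfold biop
  rw [MonoidAlgebra.coeff_single, MonoidAlgebra.coeff_single]
  rw [Finsupp.sum_single_index, Finsupp.sum_single_index]
  · split_ifs <;> simp
  · exact inner_zero p (MonoidAlgebra.single v b) u

theorem biop_add_left (x₁ x₂ y : MonoidAlgebra ℚ (FreeMonoid α)) :
    biop p (x₁ + x₂) y = biop p x₁ y + biop p x₂ y := by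
  unfold biop
  rw [MonoidAlgebra.coeff_add]
  rw [Finsupp.sum_add_index']
  · exact fun u => inner_zero p y u
  · intro u a₁ a₂
    rw [← Finsupp.sum_add]
    refine Finsupp.sum_congr fun v _ => ?_
    split_ifs <;> simp [add_mul, MonoidAlgebra.single_add]

theorem biop_add_right (x y₁ y₂ : MonoidAlgebra ℚ (FreeMonoid α)) :
    biop p x (y₁ + y₂) = biop p x y₁ + biop p x y₂ := by
  unfold biop
  rw [← Finsupp.sum_add]
  refine Finsupp.sum_congr fun u _ => ?_
  rw [MonoidAlgebra.coeff_add]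
  rw [Finsupp.sum_add_index']
  · intro v; split_ifs <;> simp
  · intro v b₁ b₂
    split_ifs <;> simp [mul_add, MonoidAlgebra.single_add]

end Aux

/-- Dendriform trialgebra axiom: `(x ≺ y) ∘ z = x ∘ (y ≻ z)`. -/
theorem prec_circ (x y z : MonoidAlgebra ℚ (FreeMonoid ℕ)) :
    trCirc (trPrec x y) z = trCirc x (trSucc y z) := by
  set pc : FreeMonoid ℕ → FreeMonoid ℕ → Prop := fun u v =>
    u.toList ≠ [] ∧ v.toList ≠ [] ∧ u.toList.maximum = v.toList.maximum with hpc
  set pp : FreeMonoid ℕ → FreeMonoid ℕ → Prop := fun u v =>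
    u.toList ≠ [] ∧ v.toList ≠ [] ∧ v.toList.maximum < u.toList.maximum with hpp
  set ps : FreeMonoid ℕ → FreeMonoid ℕ → Prop := fun u v =>
    u.toList ≠ [] ∧ v.toList ≠ [] ∧ u.toList.maximum < v.toList.maximum with hps
  have hc : ∀ x y : MonoidAlgebra ℚ (FreeMonoid ℕ), trCirc x y = biop pc x y := fun _ _ => rfl
  have hp : ∀ x y : MonoidAlgebra ℚ (FreeMonoid ℕ), trPrec x y = biop pp x y := fun _ _ => rfl
  have hs : ∀ x y : MonoidAlgebra ℚ (FreeMonoid ℕ), trSucc x y = biop ps x y := fun _ _ => rfl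
  simp only [hc, hp, hs]
  clear hc hp hs
  induction x using MonoidAlgebra.induction_linear with
  | zero => rw [biop_zero_left, biop_zero_left, biop_zero_left]
  | add f g hf hg => rw [biop_add_left, biop_add_left, biop_add_left, hf, hg]
  | single u a =>
    induction y using MonoidAlgebra.induction_linear with
    | zero => rw [biop_zero_right, biop_zero_left, biop_zero_left, biop_zero_right]
    | add f g hf hg =>
        rw [biop_add_right, biop_add_left, biop_add_left, biop_add_right, hf, hg]
    | single v b =>
      induction z using MonoidAlgebra.induction_linear with
      | zero => rw [biop_zero_right, biop_zero_right, biop_zero_right]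
      | add f g hf hg => rw [biop_add_right, biop_add_right, biop_add_right, hf, hg]
      | single w c =>
        rw [biop_single_single, biop_single_single]
        by_cases h1 : pp u v
        · obtain ⟨hu, hv, hvu⟩ := h1
          have huv : (u * v).toList.maximum = u.toList.maximum := by
            rw [FreeMonoid.toList_mul, list_maximum_append, max_eq_left hvu.le]
          have hne1 : (u * v).toList ≠ [] := by
            simp only [FreeMonoid.toList_mul, ne_eq, List.append_eq_nil_iff]
            tauto
          by_cases h2 : ps v w
          · obtain ⟨-, hw, hvw⟩ := h2
            have hvw' : (v * w).toList.maximum = w.toList.maximum := by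
              rw [FreeMonoid.toList_mul, list_maximum_append, max_eq_right hvw.le]
            have hne2 : (v * w).toList ≠ [] := by
              simp only [FreeMonoid.toList_mul, ne_eq, List.append_eq_nil_iff]
              tauto
            rw [if_pos ⟨hu, hv, hvu⟩, if_pos ⟨hv, hw, hvw⟩,
              biop_single_single, biop_single_single]
            have hiff : pc (u * v) w ↔ pc u (v * w) := by
              constructor
              · rintro ⟨-, hw', heq⟩
                exact ⟨hu, hne2, by rw [hvw', ← heq, huv]⟩
              · rintro ⟨-, -, heq⟩
                exact ⟨hne1, hw, by rw [huv, heq, hvw']⟩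
            rw [mul_assoc, mul_assoc]
            exact if_congr hiff rfl rfl
          · rw [if_pos ⟨hu, hv, hvu⟩, if_neg h2, biop_zero_right,
              biop_single_single, if_neg]
            rintro ⟨-, hw, hmax⟩
            rw [huv] at hmax
            exact h2 ⟨hv, hw, hmax ▸ hvu⟩
        · by_cases h2 : ps v w
          · obtain ⟨hv, hw, hvw⟩ := h2
            have hvw' : (v * w).toList.maximum = w.toList.maximum := by
              rw [FreeMonoid.toList_mul, list_maximum_append, max_eq_right hvw.le]
            rw [if_neg h1, if_pos ⟨hv, hw, hvw⟩, biop_zero_left,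
              biop_single_single, if_neg]
            rintro ⟨hu, -, hmax⟩
            rw [hvw'] at hmax
            exact h1 ⟨hu, hv, hmax ▸ hvw⟩
          · rw [if_neg h1, if_neg h2, biop_zero_left, biop_zero_right]
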